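/- Let F be a finite subset of Z^d contained in the box B_{n0} = {-n0,...,n0}^d, and let f : Z^d → R be a bounded function with 1_F * f = 1 (i.e., for every x in Z^d, the sum over y in F of f(x - y) equals 1). Then f has mean 1/|F|, that is, lim_{n→∞} (1/|B_n|) · Σ_{v ∈ B_n} f(v) = 1/|F|, where B_n = {-n,...,n}^d. -/

import Mathlib

open Finset Filter

private lemma abs_sum_le_card_mul {ι : Type*} (A : Finset ι) (f : ι → ℝ) (C : ℝ)
    (h : ∀ x, |f x| ≤ C) : |∑ x ∈ A, f x| ≤ A.card * C := by
  calc |∑ x ∈ A, f x| ≤ ∑ x ∈ A, |f x| := Finset.abs_sum_le_sum_abs _ _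
    _ ≤ ∑ _x ∈ A, C := Finset.sum_le_sum fun x _ => h x
    _ = A.card * C := by rw [Finset.sum_const, nsmul_eq_mul]

private lemma abs_sub_sum_le {ι : Type*} [DecidableEq ι] {A B : Finset ι} (hAB : A ⊆ B)
    (f : ι → ℝ) (C : ℝ) (h : ∀ x, |f x| ≤ C) :
    |(∑ x ∈ B, f x) - ∑ x ∈ A, f x| ≤ ((B.card : ℝ) - A.card) * C := by
  rw [← Finset.sum_sdiff_eq_sub hAB]
  have := abs_sum_le_card_mul (B \ A) f C h
  rwa [Finset.card_sdiff_of_subset hAB, Nat.cast_sub (Finset.card_le_card hAB)] at this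

private lemma card_box {d : ℕ} (a b : Fin d → ℤ) (L : ℕ) (h : ∀ i, b i + 1 - a i = L) :
    (Finset.Icc a b).card = L ^ d := by
  rw [Pi.card_Icc]
  have : ∀ i : Fin d, (Finset.Icc (a i) (b i)).card = L := by
    intro i
    rw [Int.card_Icc, h i, Int.toNat_natCast]
  rw [Finset.prod_congr rfl fun i _ => this i, Finset.prod_const, Finset.card_univ,
    Fintype.card_fin]

private lemma sum_translate_box {d : ℕ} (f : (Fin d → ℤ) → ℝ) (a b y : Fin d → ℤ) :
    ∑ x ∈ Finset.Icc a b, f (x - y) = ∑ v ∈ Finset.Icc (a - y) (b - y), f v := by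
  apply Finset.sum_nbij' (fun x => x - y) (fun v => v + y) <;>
    (intros x hx; simp_all [Finset.mem_Icc, Pi.le_def, sub_le_iff_le_add, le_sub_iff_add_le])

theorem stmt_0 (d n0 : ℕ) (F : Finset (Fin d → ℤ))
    (hFbox : ∀ v ∈ F, ∀ i, |v i| ≤ (n0 : ℤ))
    (f : (Fin d → ℤ) → ℝ) (C : ℝ) (hbd : ∀ x, |f x| ≤ C)
    (htile : ∀ x, ∑ y ∈ F, f (x - y) = 1) :
    Tendsto
      (fun n : ℕ =>
        (∑ v ∈ Finset.Icc (fun _ : Fin d => -(n : ℤ)) (fun _ => (n : ℤ)), f v) /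
          ((Finset.Icc (fun _ : Fin d => -(n : ℤ)) (fun _ => (n : ℤ))).card : ℝ))
      atTop (nhds (1 / (F.card : ℝ))) := by
  -- basic facts
  have hC : 0 ≤ C := le_trans (abs_nonneg _) (hbd 0)
  have hFne : F.Nonempty := by
    by_contra h
    rw [Finset.not_nonempty_iff_eq_empty] at h
    have := htile 0
    simp [h] at this
  have hk : (0:ℝ) < F.card := by exact_mod_cast Finset.card_pos.mpr hFne
  set k : ℝ := (F.card : ℝ) with hkdef
  -- boxes
  set Box : ℕ → Finset (Fin d → ℤ) :=
    fun n => Finset.Icc (fun _ : Fin d => -(n : ℤ)) (fun _ => (n : ℤ)) with hBox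
  have hcard : ∀ n : ℕ, (Box n).card = (2*n+1)^d := by
    intro n
    apply card_box
    intro i
    push_cast
    ring
  have hNpos : ∀ n : ℕ, (0:ℝ) < ((2*n+1:ℕ):ℝ)^d := by
    intro n
    positivity
  set S : ℕ → ℝ := fun n => ∑ v ∈ Box n, f v with hS
  -- key estimate
  have key : ∀ n : ℕ, n0 ≤ n →
      |S n / ((2*n+1:ℕ):ℝ)^d - 1 / k| ≤
        2*C*(((2*n+1:ℕ):ℝ)^d - ((2*(n-n0)+1:ℕ):ℝ)^d) / ((2*n+1:ℕ):ℝ)^d := by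
    intro n hn
    set N : ℕ := (2*n+1)^d with hN
    set M : ℕ := (2*(n-n0)+1)^d with hM
    -- step B : per-element bound
    have stepB : ∀ y ∈ F, |S n - ∑ x ∈ Box n, f (x - y)| ≤ 2*C*((N:ℝ) - M) := by
      intro y hy
      have htrans := sum_translate_box f (fun _ : Fin d => -(n : ℤ)) (fun _ => (n : ℤ)) y
      -- inner small box
      have hsub1 : Box (n - n0) ⊆ Box n := by
        apply Finset.Icc_subset_Icc <;> intro i <;> simp only <;> omega
      have hsub2 : Box (n - n0) ⊆
          Finset.Icc ((fun _ : Fin d => -(n : ℤ)) - y) ((fun _ : Fin d => (n : ℤ)) - y) := by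
        apply Finset.Icc_subset_Icc <;> intro i <;>
          simp only [Pi.sub_apply]
        · have := hFbox y hy i
          have h2 : ((n - n0 : ℕ) : ℤ) = (n : ℤ) - n0 := by
            push_cast [hn]; ring
          rw [h2]
          have := abs_le.mp (hFbox y hy i)
          omega
        · have h2 : ((n - n0 : ℕ) : ℤ) = (n : ℤ) - n0 := by
            push_cast [hn]; ring
          rw [h2]
          have := abs_le.mp (hFbox y hy i)
          omega
      have hcardT : (Finset.Icc ((fun _ : Fin d => -(n : ℤ)) - y)
          ((fun _ : Fin d => (n : ℤ)) - y)).card = N := by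
        apply card_box
        intro i
        simp only [Pi.sub_apply]
        push_cast
        ring
      have hcardM : (Box (n - n0)).card = M := hcard (n - n0)
      have e1 : |S n - ∑ v ∈ Box (n - n0), f v| ≤ ((N:ℝ) - M) * C := by
        have := abs_sub_sum_le hsub1 f C hbd
        rwa [hcard n, hcardM] at this
      have e2 : |(∑ x ∈ Box n, f (x - y)) - ∑ v ∈ Box (n - n0), f v| ≤ ((N:ℝ) - M) * C := by
        simp only [hBox]
        rw [htrans]
        have := abs_sub_sum_le hsub2 f C hbd
        rwa [hcardT, hcardM] at this
      calc |S n - ∑ x ∈ Box n, f (x - y)|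
          = |(S n - ∑ v ∈ Box (n - n0), f v) -
              ((∑ x ∈ Box n, f (x - y)) - ∑ v ∈ Box (n - n0), f v)| := by congr 1; ring
        _ ≤ |S n - ∑ v ∈ Box (n - n0), f v| +
              |(∑ x ∈ Box n, f (x - y)) - ∑ v ∈ Box (n - n0), f v| := abs_sub _ _
        _ ≤ ((N:ℝ) - M) * C + ((N:ℝ) - M) * C := add_le_add e1 e2
        _ = 2*C*((N:ℝ) - M) := by ring
    -- step A
    have stepA : k * S n - (N:ℝ) = ∑ y ∈ F, (S n - ∑ x ∈ Box n, f (x - y)) := by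
      rw [Finset.sum_sub_distrib, Finset.sum_const, nsmul_eq_mul]
      have : ∑ y ∈ F, ∑ x ∈ Box n, f (x - y) = (N:ℝ) := by
        rw [Finset.sum_comm]
        have : ∀ x ∈ Box n, ∑ y ∈ F, f (x - y) = 1 := fun x _ => htile x
        rw [Finset.sum_congr rfl this, Finset.sum_const, nsmul_eq_mul, mul_one, hcard n]
      rw [this, hkdef]
    -- step C
    have stepC : |k * S n - (N:ℝ)| ≤ k * (2*C*((N:ℝ) - M)) := by
      rw [stepA]
      calc |∑ y ∈ F, (S n - ∑ x ∈ Box n, f (x - y))|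
          ≤ ∑ y ∈ F, |S n - ∑ x ∈ Box n, f (x - y)| := Finset.abs_sum_le_sum_abs _ _
        _ ≤ ∑ _y ∈ F, 2*C*((N:ℝ) - M) := Finset.sum_le_sum stepB
        _ = k * (2*C*((N:ℝ) - M)) := by rw [Finset.sum_const, nsmul_eq_mul]
    -- step D
    have nN : ((N:ℕ):ℝ) = ((2*n+1:ℕ):ℝ)^d := by rw [hN]; push_cast; ring
    have nM : ((M:ℕ):ℝ) = ((2*(n-n0)+1:ℕ):ℝ)^d := by rw [hM]; push_cast; ring
    have hNpos' : (0:ℝ) < (N:ℝ) := by rw [nN]; exact hNpos n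
    have heq : S n / (N:ℝ) - 1 / k = (k * S n - N) / (k * N) := by
      field_simp
    rw [← nN, ← nM, heq, abs_div, abs_of_pos (by positivity : (0:ℝ) < k * (N:ℝ)),
      div_le_div_iff₀ (by positivity) hNpos']
    calc |k * S n - (N:ℝ)| * (N:ℝ)
        ≤ k * (2*C*((N:ℝ) - M)) * (N:ℝ) := mul_le_mul_of_nonneg_right stepC hNpos'.le
      _ = 2*C*((N:ℝ) - (M:ℝ)) * (k * (N:ℝ)) := by ring
  -- error function tends to 0
  set e : ℕ → ℝ :=
    fun n => 2*C*(((2*n+1:ℕ):ℝ)^d - ((2*(n-n0)+1:ℕ):ℝ)^d) / ((2*n+1:ℕ):ℝ)^d with he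
  have hratio : Tendsto (fun n : ℕ => ((2*(n-n0)+1:ℕ):ℝ) / ((2*n+1:ℕ):ℝ)) atTop (nhds 1) := by
    have h2 : Tendsto (fun n : ℕ => (2*(n:ℝ)+1)) atTop atTop :=
      tendsto_atTop_add_const_right _ 1 (tendsto_natCast_atTop_atTop.const_mul_atTop two_pos)
    have h3 : Tendsto (fun n : ℕ => (2*(n0:ℝ))/(2*(n:ℝ)+1)) atTop (nhds 0) :=
      Tendsto.div_atTop tendsto_const_nhds h2
    have h1 : Tendsto (fun n : ℕ => 1 - (2*(n0:ℝ))/(2*(n:ℝ)+1)) atTop (nhds 1) := by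
      have := (tendsto_const_nhds (x := (1:ℝ)) (f := atTop)).sub h3
      simpa using this
    apply h1.congr'
    filter_upwards [eventually_ge_atTop n0] with n hn
    have hne : (2*(n:ℝ)+1) ≠ 0 := by positivity
    field_simp
    push_cast [hn]
    ring
  have hE : Tendsto e atTop (nhds 0) := by
    have hpow : Tendsto (fun n : ℕ => (((2*(n-n0)+1:ℕ):ℝ) / ((2*n+1:ℕ):ℝ))^d) atTop
        (nhds 1) := by
      simpa using hratio.pow d
    have h4 : Tendsto (fun n : ℕ => 2*C*(1 - (((2*(n-n0)+1:ℕ):ℝ) / ((2*n+1:ℕ):ℝ))^d)) atTop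
        (nhds 0) := by
      have := ((tendsto_const_nhds (x := (1:ℝ)) (f := atTop)).sub hpow).const_mul (2*C)
      simpa using this
    apply h4.congr
    intro n
    have hne : ((2*n+1:ℕ):ℝ)^d ≠ 0 := (hNpos n).ne'
    rw [he]
    field_simp
    rw [div_pow, mul_assoc, sub_mul, div_mul_cancel₀ _ hne, one_mul]
  -- conclude
  have main : Tendsto (fun n : ℕ => S n / ((2*n+1:ℕ):ℝ)^d) atTop (nhds (1/k)) := by
    rw [← tendsto_sub_nhds_zero_iff]
    apply squeeze_zero_norm' _ hE
    filter_upwards [eventually_ge_atTop n0] with n hn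
    rw [Real.norm_eq_abs]
    simp only [he]
    exact key n hn
  refine main.congr fun n => ?_
  have hc : ((Finset.Icc (fun _ : Fin d => -(n : ℤ)) (fun _ => (n : ℤ))).card : ℝ)
      = ((2*n+1:ℕ):ℝ)^d := by
    rw [show (Finset.Icc (fun _ : Fin d => -(n : ℤ)) (fun _ => (n : ℤ))) = Box n from rfl,
      hcard n]
    push_cast
    ring
  rw [hc]
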